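/- Let CDC(S) be a combinatorial disjunctive constraint with intersection graph K_S (the complete graph on vertex set S, where the edge between S1 and S2 has weight |S1 ∩ S2|). Then any spanning tree of K_S that is not a maximum spanning tree cannot be a junction tree of CDC(S). -/

import Mathlib

/-- A junction tree for a labeled collection of finite index sets. -/
def IsJunctionTree {ι α : Type*} [DecidableEq α] (G : SimpleGraph ι)
    (f : ι → Finset α) : Prop :=
  G.IsTree ∧ ∀ (i j : ι) (p : G.Walk i j), p.IsPath →
    (∀ x ∈ p.support, f i ∩ f j ⊆ f x) ∧
    (∀ a b : ι, s(a, b) ∈ p.edges → f i ∩ f j ⊆ f a ∩ f b)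

open scoped Classical in
/-- The weight of a spanning tree `T` of the intersection graph `K_𝒮`:
the sum over the edges of `T` of the cardinality of the middle set `S1 ∩ S2`. -/
noncomputable def jtWeight {α : Type*} [DecidableEq α] (𝒮 : Finset (Finset α))
    (T : SimpleGraph {S // S ∈ 𝒮}) : ℕ :=
  ∑ e : Sym2 {S // S ∈ 𝒮}, if e ∈ T.edgeSet then
    Sym2.lift ⟨fun (A B : {S // S ∈ 𝒮}) => ((A : Finset α) ∩ (B : Finset α)).card,
      fun A B => by simp [Finset.inter_comm]⟩ e
  else 0

namespace JTAux

open SimpleGraph Finset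
open scoped Classical

section Graphs
variable {V : Type*} [Fintype V]

set_option linter.unusedSectionVars false in
lemma card_edgeFinset_congr' {G : SimpleGraph V} (h1 h2 : Fintype G.edgeSet) :
    (@SimpleGraph.edgeFinset V G h1).card = (@SimpleGraph.edgeFinset V G h2).card := by
  congr 1
  rw [Subsingleton.elim h1 h2]

/-- Any acyclic graph on a finite nonempty vertex type extends to a spanning tree. -/
lemma exists_isTree_ge [Nonempty V] :
    ∀ (n : ℕ) (G : SimpleGraph V), Fintype.card (Sym2 V) ≤ n + G.edgeFinset.card →
      G.IsAcyclic → ∃ T : SimpleGraph V, G ≤ T ∧ T.IsTree := by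
  intro n
  induction n with
  | zero =>
    intro G hcard _
    exfalso
    have h1 : G.edgeFinset = (Finset.univ : Finset (Sym2 V)) := by
      apply Finset.eq_univ_of_card
      exact le_antisymm (Finset.card_le_univ _) (by simpa using hcard)
    obtain ⟨v⟩ := ‹Nonempty V›
    have : s(v, v) ∈ G.edgeFinset := h1 ▸ Finset.mem_univ _
    rw [mem_edgeFinset, mem_edgeSet] at this
    exact G.irrefl this
  | succ n ih =>
    intro G hcard hG
    by_cases hconn : G.Connected
    · exact ⟨G, le_refl _, ⟨hconn, hG⟩⟩
    · have hpre : ¬ G.Preconnected := fun h => hconn ((connected_iff G).mpr ⟨h, ‹Nonempty V›⟩)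
      unfold SimpleGraph.Preconnected at hpre
      push_neg at hpre
      obtain ⟨u, v, hr⟩ := hpre
      have hne : u ≠ v := by rintro rfl; exact hr (Reachable.refl u)
      have hnadj : ¬ G.Adj u v := fun h => hr h.reachable
      set G' := G ⊔ fromEdgeSet {s(u, v)} with hG'
      have hadj' : G'.Adj u v := by
        simp [hG', sup_adj, fromEdgeSet_adj, hne]
      have hlt : G < G' := by
        refine lt_of_le_of_ne le_sup_left ?_
        intro h; rw [← h] at hadj'; exact hnadj hadj'
      have hacy' : G'.IsAcyclic := by
        intro w c hc
        by_cases he : s(u, v) ∈ c.edges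
        · have hreach := (adj_and_reachable_delete_edges_iff_exists_cycle.mpr
            ⟨w, c, hc, he⟩).2
          refine hr (hreach.mono ?_)
          intro a b hab
          rw [deleteEdges_adj] at hab
          obtain ⟨hab1, hab2⟩ := hab
          rcases (sup_adj _ _ _ _).mp hab1 with h | h
          · exact h
          · exact absurd ((fromEdgeSet_adj _).mp h).1 hab2
        · have hce : ∀ e ∈ c.edges, e ∈ G.edgeSet := by
            intro e hec
            have hmem := c.edges_subset_edgeSet hec
            rw [hG', edgeSet_sup, edgeSet_fromEdgeSet] at hmem
            rcases hmem with h | h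
            · exact h
            · have heq : e = s(u, v) := by simpa using h.1
              exact absurd (heq ▸ hec) he
          exact hG (c.transfer G hce) (hc.transfer hce)
      obtain ⟨T, hle, hTree⟩ := ih G' (by
        have h3 : G.edgeFinset.card < G'.edgeFinset.card :=
          Finset.card_lt_card ((edgeFinset_ssubset_edgeFinset).mpr hlt)
        rw [card_edgeFinset_congr' _ _]
        omega) hacy'
      exact ⟨T, le_trans hlt.le hle, hTree⟩

lemma IsAcyclic.card_edgeFinset_add_one_le [Nonempty V] {G : SimpleGraph V}
    (hG : G.IsAcyclic) : G.edgeFinset.card + 1 ≤ Fintype.card V := by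
  obtain ⟨T, hle, hTree⟩ := exists_isTree_ge (Fintype.card (Sym2 V)) G (by omega) hG
  have h1 := hTree.card_edgeFinset
  have h2 : G.edgeFinset.card ≤ T.edgeFinset.card :=
    Finset.card_le_card (edgeFinset_mono hle)
  omega

omit [Fintype V] in
lemma induce_isAcyclic {G : SimpleGraph V} (h : G.IsAcyclic) (s : Set V) :
    (G.induce s).IsAcyclic := by
  intro v c hc
  exact h (c.map (SimpleGraph.Embedding.induce (G := G) s).toHom)
    ((SimpleGraph.Walk.map_isCycle_iff_of_injective
      (SimpleGraph.Embedding.induce (G := G) s).injective).mpr hc)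

omit [Fintype V] in
lemma reachable_induce {G : SimpleGraph V} {s : Set V} :
    ∀ {u v : V} (p : G.Walk u v), (∀ w ∈ p.support, w ∈ s) →
      ∀ (hu : u ∈ s) (hv : v ∈ s), (G.induce s).Reachable ⟨u, hu⟩ ⟨v, hv⟩ := by
  intro u v p
  induction p with
  | nil => intro _ hu hv; exact SimpleGraph.Reachable.refl _
  | @cons u w v h q ih =>
      intro hs hu hv
      have hw : w ∈ s := hs w (by simp)
      have hadj : (G.induce s).Adj ⟨u, hu⟩ ⟨w, hw⟩ := by
        simp only [SimpleGraph.comap_adj, Function.Embedding.coe_subtype]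
        exact h
      exact hadj.reachable.trans (ih (fun z hz => hs z (by simp [hz])) hw hv)

end Graphs

section Count

variable {α : Type*} [DecidableEq α] (𝒮 : Finset (Finset α))

/-- number of edges of `G` whose middle set contains `x` -/
noncomputable def cnt (x : α) (G : SimpleGraph {S // S ∈ 𝒮}) : ℕ :=
  (G.edgeFinset.filter (fun e => ∀ v ∈ e, x ∈ (v : {S // S ∈ 𝒮}).1)).card

lemma jtWeight_eq (G : SimpleGraph {S // S ∈ 𝒮}) :
    jtWeight 𝒮 G = ∑ x ∈ 𝒮.sup id, cnt 𝒮 x G := by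
  unfold jtWeight
  simp only [← SimpleGraph.mem_edgeFinset]
  rw [Finset.sum_ite_mem, Finset.univ_inter]
  have step : ∀ e ∈ G.edgeFinset,
      (Sym2.lift ⟨fun (A B : {S // S ∈ 𝒮}) => ((A : Finset α) ∩ (B : Finset α)).card,
        fun A B => by simp [Finset.inter_comm]⟩) e =
      ∑ x ∈ 𝒮.sup id, if (∀ v ∈ e, x ∈ (v : {S // S ∈ 𝒮}).1) then 1 else 0 := by
    intro e he
    induction e using Sym2.ind with
    | _ A B =>
      have hcond : ∀ x : α, (∀ v ∈ s(A, B), x ∈ (v : {S // S ∈ 𝒮}).1) ↔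
          x ∈ (A : Finset α) ∩ (B : Finset α) := by
        intro x
        simp [Sym2.mem_iff, Finset.mem_inter, or_imp, forall_and]
      simp only [hcond, Sym2.lift_mk]
      rw [Finset.sum_boole]
      norm_num
      have hAU : (A : Finset α) ⊆ 𝒮.sup id := Finset.le_sup (f := id) A.2
      congr 1
      ext y
      simp only [Finset.mem_filter, Finset.mem_inter]
      exact ⟨fun h => ⟨hAU h.1, h⟩, fun h => h.2⟩
  rw [Finset.sum_congr rfl step, Finset.sum_comm]
  unfold cnt
  refine Finset.sum_congr rfl fun x _ => ?_
  rw [Finset.sum_boole]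
  norm_num

lemma cnt_eq_card_induce (x : α) (G : SimpleGraph {S // S ∈ 𝒮}) :
    cnt 𝒮 x G = (G.induce {v : {S // S ∈ 𝒮} | x ∈ v.1}).edgeFinset.card := by
  unfold cnt
  refine (Finset.card_bij (fun e _ => Sym2.map Subtype.val e) ?_ ?_ ?_).symm
  · intro e he
    induction e using Sym2.ind with
    | _ a b =>
      rw [SimpleGraph.mem_edgeFinset, SimpleGraph.mem_edgeSet] at he
      rw [Finset.mem_filter]
      constructor
      · simp only [Sym2.map_pair_eq, SimpleGraph.mem_edgeFinset, SimpleGraph.mem_edgeSet]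
        exact he
      · intro v hv
        simp only [Sym2.map_pair_eq, Sym2.mem_iff] at hv
        rcases hv with rfl | rfl
        · exact a.2
        · exact b.2
  · intro e1 _ e2 _ h
    exact Sym2.map.injective Subtype.val_injective h
  · intro e het
    rw [Finset.mem_filter] at het
    obtain ⟨he, hcond⟩ := het
    induction e using Sym2.ind with
    | _ a b =>
      rw [SimpleGraph.mem_edgeFinset, SimpleGraph.mem_edgeSet] at he
      have ha : x ∈ a.1 := hcond a (by simp [Sym2.mem_iff])
      have hb : x ∈ b.1 := hcond b (by simp [Sym2.mem_iff])
      refine ⟨s(⟨a, ha⟩, ⟨b, hb⟩), ?_, ?_⟩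
      · rw [SimpleGraph.mem_edgeFinset, SimpleGraph.mem_edgeSet]
        simpa using he
      · simp [Sym2.map_pair_eq]

end Count

end JTAux

open scoped Classical in
/-- Any spanning tree of the intersection graph `K_𝒮` that is not a
maximum spanning tree cannot be a junction tree of `CDC(𝒮)`.  (Spanning trees of
the complete graph `K_𝒮` are exactly the trees on the vertex set `𝒮`.) -/
theorem non_max_spanning_tree_not_junction_tree {α : Type*} [DecidableEq α]
    (𝒮 : Finset (Finset α)) (T : SimpleGraph {S // S ∈ 𝒮}) (hT : T.IsTree)
    (hNotMax : ∃ T' : SimpleGraph {S // S ∈ 𝒮}, T'.IsTree ∧ jtWeight 𝒮 T < jtWeight 𝒮 T') :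
    ¬ IsJunctionTree T (fun S => (S : Finset α)) := by
  intro hJ
  have key : ∀ G' : SimpleGraph {S // S ∈ 𝒮}, G'.IsTree → jtWeight 𝒮 G' ≤ jtWeight 𝒮 T := by
    intro G' hG'
    rw [JTAux.jtWeight_eq, JTAux.jtWeight_eq]
    refine Finset.sum_le_sum fun x hx => ?_
    rw [JTAux.cnt_eq_card_induce, JTAux.cnt_eq_card_induce]
    obtain ⟨S0, hS0, hxS0⟩ : ∃ S ∈ 𝒮, x ∈ S := by
      simpa [Finset.mem_sup] using hx
    haveI : Nonempty ↥{v : {S // S ∈ 𝒮} | x ∈ v.1} := ⟨⟨⟨S0, hS0⟩, hxS0⟩⟩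
    have hforest : (G'.induce {v : {S // S ∈ 𝒮} | x ∈ v.1}).IsAcyclic :=
      JTAux.induce_isAcyclic hG'.IsAcyclic _
    have h1 := JTAux.IsAcyclic.card_edgeFinset_add_one_le hforest
    have htree : (T.induce {v : {S // S ∈ 𝒮} | x ∈ v.1}).IsTree := by
      constructor
      · refine SimpleGraph.Connected.mk ?_
        rintro ⟨a, ha⟩ ⟨b, hb⟩
        obtain ⟨p0⟩ := hT.isConnected a b
        have hsup := (hJ.2 a b p0.toPath.1 p0.toPath.2).1
        refine JTAux.reachable_induce p0.toPath.1 (fun w hw => ?_) ha hb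
        exact hsup w hw (Finset.mem_inter.mpr ⟨ha, hb⟩)
      · exact JTAux.induce_isAcyclic hJ.1.IsAcyclic _
    have h2 := htree.card_edgeFinset
    rw [JTAux.card_edgeFinset_congr' _ _] at h1 h2
    have key2 : ∀ n m k : ℕ, n + 1 ≤ k → m + 1 = k → n ≤ m := by omega
    exact (le_of_eq_of_le (JTAux.card_edgeFinset_congr' _ _) (key2 _ _ _ h1 h2)).trans_eq
      (JTAux.card_edgeFinset_congr' _ _)
  obtain ⟨T', hT'tree, hlt⟩ := hNotMax
  exact absurd (key T' hT'tree) (by omega)
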